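/- Let n ≥ 1, let A be an n×n real matrix whose complex eigenvalues all lie in ℂ∖(−∞,0], let r ∈ ℝ, and set b = (tanh(sinh(r))+1)/2 ∈ (0,1). Then the improper integral ∫_{r}^{∞} F_DE(x) dx exists and equals ∫_b^1 (t(A−I)+I)^{-1} dt, where F_DE(x) := cosh(x)·sech²(sinh(x))·[(1+tanh(sinh(x)))(A−I)+2I]^{-1}. -/

import Mathlib

open MeasureTheory

/-- Entrywise integral of a matrix-valued function over an interval. -/
noncomputable def entryIntegral {n : ℕ} (f : ℝ → Matrix (Fin n) (Fin n) ℝ) (a b : ℝ) :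
    Matrix (Fin n) (Fin n) ℝ :=
  Matrix.of fun i j => ∫ t in a..b, f t i j

/-- The integrand of the double exponential transformation. -/
noncomputable def FDE {n : ℕ} (A : Matrix (Fin n) (Fin n) ℝ) (x : ℝ) :
    Matrix (Fin n) (Fin n) ℝ :=
  (Real.cosh x * (1 / Real.cosh (Real.sinh x)) ^ 2) •
    ((1 + Real.tanh (Real.sinh x)) • (A - 1) + (2 : Matrix (Fin n) (Fin n) ℝ))⁻¹

section Aux

open Real Filter Set

lemma tanh_lt_one' (y : ℝ) : Real.tanh y < 1 := by
  rw [Real.tanh_eq_sinh_div_cosh, div_lt_one (Real.cosh_pos y)]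
  nlinarith [Real.cosh_sub_sinh y, Real.exp_pos (-y)]

lemma neg_one_lt_tanh' (y : ℝ) : -1 < Real.tanh y := by
  rw [Real.tanh_eq_sinh_div_cosh, lt_div_iff₀ (Real.cosh_pos y)]
  nlinarith [Real.sinh_add_cosh y, Real.exp_pos y]

lemma hasDerivAt_tanh' (y : ℝ) : HasDerivAt Real.tanh (1 / Real.cosh y ^ 2) y := by
  have h : HasDerivAt (fun z => Real.sinh z / Real.cosh z)
      ((Real.cosh y * Real.cosh y - Real.sinh y * Real.sinh y) / Real.cosh y ^ 2) y :=
    (Real.hasDerivAt_sinh y).div (Real.hasDerivAt_cosh y) (Real.cosh_pos y).ne'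
  have e1 : (fun z => Real.sinh z / Real.cosh z) = Real.tanh := by
    funext z; rw [Real.tanh_eq_sinh_div_cosh]
  have e2 : (Real.cosh y * Real.cosh y - Real.sinh y * Real.sinh y) = 1 := by
    have := Real.cosh_sq_sub_sinh_sq y; nlinarith
  rw [e1, e2] at h; exact h

lemma tendsto_tanh_atTop' : Tendsto Real.tanh atTop (nhds 1) := by
  have key : ∀ y : ℝ, Real.tanh y = 1 - 2 * Real.exp (-y) / (Real.exp y + Real.exp (-y)) := by
    intro y
    rw [Real.tanh_eq_sinh_div_cosh, Real.sinh_eq, Real.cosh_eq]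
    have h1 : Real.exp y + Real.exp (-y) ≠ 0 := by positivity
    field_simp
    ring
  have hden : Tendsto (fun y : ℝ => Real.exp y + Real.exp (-y)) atTop atTop :=
    tendsto_atTop_mono (fun y => le_add_of_nonneg_right (Real.exp_pos _).le)
      Real.tendsto_exp_atTop
  have hnum : Tendsto (fun y : ℝ => 2 * Real.exp (-y)) atTop (nhds (2 * 0)) := by
    exact (tendsto_const_nhds.mul ((Real.tendsto_exp_atBot).comp tendsto_neg_atTop_atBot))
  have h0 : Tendsto (fun y : ℝ => 2 * Real.exp (-y) / (Real.exp y + Real.exp (-y))) atTop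
      (nhds 0) := Tendsto.div_atTop (by simpa using hnum) hden
  have h1 : Tendsto (fun y : ℝ => 1 - 2 * Real.exp (-y) / (Real.exp y + Real.exp (-y)))
      atTop (nhds (1 - 0)) := tendsto_const_nhds.sub h0
  rw [sub_zero] at h1
  exact h1.congr fun y => (key y).symm

lemma tendsto_sinh_atTop' : Tendsto Real.sinh atTop atTop := by
  apply tendsto_atTop_mono' atTop (f₁ := fun y => (Real.exp y - 1) / 2)
  · filter_upwards [eventually_ge_atTop (0:ℝ)] with y hy
    rw [Real.sinh_eq]
    have : Real.exp (-y) ≤ 1 := Real.exp_le_one_iff.mpr (by linarith)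
    linarith
  · have h := (tendsto_atTop_add_const_right atTop (-1:ℝ) Real.tendsto_exp_atTop).atTop_div_const
      (show (0:ℝ) < 2 by norm_num)
    exact h.congr fun y => by ring

lemma det_unit' {n : ℕ} (A : Matrix (Fin n) (Fin n) ℝ)
    (hspec : ∀ μ ∈ spectrum ℂ (A.map fun x => (x : ℂ)), ¬(μ.im = 0 ∧ μ.re ≤ 0)) :
    ∀ t ∈ Set.Icc (0:ℝ) 1, IsUnit (t • (A - 1) + 1).det := by
  intro t ht
  rcases eq_or_lt_of_le ht.1 with h0 | h0
  · simp [← h0]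
  rw [isUnit_iff_ne_zero]
  intro hdet
  set c : ℂ := ((-(1 - t) / t : ℝ) : ℂ) with hc
  have hmem : c ∈ spectrum ℂ (A.map fun x => (x : ℂ)) := by
    rw [spectrum.mem_iff]
    rw [Matrix.isUnit_iff_isUnit_det, isUnit_iff_ne_zero]
    push_neg
    have hmap : ((t • (A - 1) + 1 : Matrix (Fin n) (Fin n) ℝ).map fun x => (x : ℂ)).det = 0 := by
      have hh : ((t • (A - 1) + 1 : Matrix (Fin n) (Fin n) ℝ).map fun x => (x : ℂ))
          = Complex.ofRealHom.mapMatrix (t • (A - 1) + 1) := rfl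
      rw [hh, ← RingHom.map_det, hdet]
      simp
    have heq : ((t • (A - 1) + 1 : Matrix (Fin n) (Fin n) ℝ).map fun x => (x : ℂ))
        = (-(t:ℂ)) • ((algebraMap ℂ (Matrix (Fin n) (Fin n) ℂ)) c - A.map fun x => (x : ℂ)) := by
      have htc : (t:ℂ) ≠ 0 := Complex.ofReal_ne_zero.mpr h0.ne'
      ext i j
      simp [Matrix.map_apply, Matrix.add_apply, Matrix.smul_apply, Matrix.sub_apply,
        Matrix.one_apply, Matrix.algebraMap_matrix_apply, hc]
      rcases eq_or_ne i j with rfl | hij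
      ·
        simp only [eq_self_iff_true, if_true]
        field_simp [htc]
        push_cast
        ring
      · simp [hij]
    rw [heq, Matrix.det_smul] at hmap
    rcases mul_eq_zero.mp hmap with h | h
    · exact absurd h (pow_ne_zero _ (by simpa using (ne_of_gt h0)))
    · exact h
  refine hspec c hmem ⟨by simp [hc], ?_⟩
  simp only [hc, Complex.ofReal_re]
  have h2 : (0:ℝ) ≤ (1 - t) / t := div_nonneg (by linarith [ht.2]) h0.le
  rw [neg_div]
  linarith

end Aux

open Real Filter Set

/-- Right tail of the DE integral equals the right-endpoint truncation of the standard
integral representation. -/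
theorem stmt_13 {n : ℕ} (hn : 1 ≤ n) (A : Matrix (Fin n) (Fin n) ℝ)
    (hspec : ∀ μ ∈ spectrum ℂ (A.map fun x => (x : ℂ)), ¬(μ.im = 0 ∧ μ.re ≤ 0))
    (r : ℝ) (b : ℝ) (hbdef : b = (Real.tanh (Real.sinh r) + 1) / 2) :
    (∀ i j, IntegrableOn (fun x => FDE A x i j) (Set.Ici r)) ∧
      (Matrix.of fun i j => ∫ x in Set.Ici r, FDE A x i j) =
        entryIntegral (fun t => (t • (A - 1) + 1)⁻¹) b 1 := by
  have hdetu := det_unit' A hspec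
  set φ : ℝ → ℝ := fun x => (Real.tanh (Real.sinh x) + 1) / 2 with hφ
  set φ' : ℝ → ℝ := fun x => Real.cosh x * (1 / Real.cosh (Real.sinh x)) ^ 2 / 2 with hφ'
  have hderiv : ∀ x, HasDerivAt φ (φ' x) x := by
    intro x
    have h1 : HasDerivAt (fun x => Real.tanh (Real.sinh x))
        (1 / Real.cosh (Real.sinh x) ^ 2 * Real.cosh x) x :=
      (hasDerivAt_tanh' (Real.sinh x)).comp x (Real.hasDerivAt_sinh x)
    have h2 := (h1.add_const 1).div_const 2
    convert h2 using 1
    show Real.cosh x * (1 / Real.cosh (Real.sinh x)) ^ 2 / 2 = _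
    ring
    all_goals rfl
  have hderivpos : ∀ x, 0 < φ' x := by
    intro x
    have := Real.cosh_pos x
    have := Real.cosh_pos (Real.sinh x)
    positivity
  have hmono : StrictMono φ := strictMono_of_deriv_pos fun x => by
    rw [(hderiv x).deriv]; exact hderivpos x
  have hb : φ r = b := hbdef.symm
  have hlt1 : ∀ x, φ x < 1 := fun x => by
    have := tanh_lt_one' (Real.sinh x); simp only [hφ]; linarith
  have hpos : ∀ x, 0 < φ x := fun x => by
    have := neg_one_lt_tanh' (Real.sinh x); simp only [hφ]; linarith
  have htend : Tendsto φ atTop (nhds 1) := by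
    have h1 : Tendsto (fun x => Real.tanh (Real.sinh x)) atTop (nhds 1) :=
      tendsto_tanh_atTop'.comp tendsto_sinh_atTop'
    have h2 := (h1.add_const 1).div_const 2
    norm_num at h2
    exact h2
  have himg : φ '' Set.Ici r = Set.Ico b 1 := by
    apply Set.Subset.antisymm
    · rintro _ ⟨x, hx, rfl⟩
      exact ⟨hb ▸ hmono.le_iff_le.mpr hx, hlt1 x⟩
    · rintro y ⟨hy1, hy2⟩
      have hev : ∀ᶠ x in atTop, y < φ x := htend.eventually (eventually_gt_nhds hy2)
      obtain ⟨M, hM1, hM2⟩ := (hev.and (eventually_ge_atTop r)).exists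
      have : y ∈ Set.Icc (φ r) (φ M) := ⟨hb ▸ hy1, hM1.le⟩
      have hc : ContinuousOn φ (Set.Icc r M) := fun x _ =>
        (hderiv x).continuousAt.continuousWithinAt
      obtain ⟨x, hx, hxy⟩ := intermediate_value_Icc hM2 hc this
      exact ⟨x, hx.1, hxy⟩
  have hb01 : b ∈ Set.Ioo (0:ℝ) 1 := hb ▸ ⟨hpos r, hlt1 r⟩
  have hble : b ≤ 1 := hb01.2.le
  set M : ℝ → Matrix (Fin n) (Fin n) ℝ := fun t => t • (A - 1) + 1 with hM
  set g : ℝ → Matrix (Fin n) (Fin n) ℝ := fun t => (M t)⁻¹ with hg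
  have hMcont : Continuous M := by
    apply Continuous.add _ continuous_const
    exact continuous_id.smul continuous_const
  have hdetne : ∀ t ∈ Set.Icc b 1, (M t).det ≠ 0 := fun t ht =>
    (hdetu t ⟨le_trans hb01.1.le ht.1, ht.2⟩).ne_zero
  have hgcont : ∀ i j, ContinuousOn (fun t => g t i j) (Set.Icc b 1) := by
    intro i j
    have heq : ∀ t, g t i j = ((M t).det)⁻¹ * (M t).adjugate i j := by
      intro t
      show (M t)⁻¹ i j = _
      rw [Matrix.inv_def, Matrix.smul_apply, Ring.inverse_eq_inv, smul_eq_mul]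
    simp_rw [heq]
    exact (hMcont.matrix_det.continuousOn.inv₀ hdetne).mul
      (hMcont.matrix_adjugate.matrix_elem i j).continuousOn
  have hgint : ∀ i j, IntegrableOn (fun t => g t i j) (Set.Ico b 1) := fun i j =>
    ((hgcont i j).integrableOn_compact isCompact_Icc).mono_set Set.Ico_subset_Icc_self
  have hFDE : ∀ x, FDE A x = φ' x • g (φ x) := by
    intro x
    have hdet : IsUnit (M (φ x)).det := hdetu (φ x) ⟨(hpos x).le, (hlt1 x).le⟩
    have hmat : ((1 + Real.tanh (Real.sinh x)) • (A - 1) + (2 : Matrix (Fin n) (Fin n) ℝ))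
        = (2:ℝ) • M (φ x) := by
      rw [hM, smul_add, smul_smul]
      congr 1
      · congr 1
        simp only [hφ]
        ring
      · rw [two_smul]
        exact (one_add_one_eq_two).symm
    haveI : Invertible (2:ℝ) := invertibleOfNonzero two_ne_zero
    show (Real.cosh x * (1 / Real.cosh (Real.sinh x)) ^ 2) •
        ((1 + Real.tanh (Real.sinh x)) • (A - 1) + (2 : Matrix (Fin n) (Fin n) ℝ))⁻¹
        = φ' x • (M (φ x))⁻¹
    rw [hmat, Matrix.inv_smul (A := M (φ x)) (2:ℝ) hdet, smul_smul]
    congr 1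
    rw [invOf_eq_inv]
    simp only [hφ']
    ring
  have hdW : ∀ x ∈ Set.Ici r, HasDerivWithinAt φ (φ' x) (Set.Ici r) x := fun x _ =>
    (hderiv x).hasDerivWithinAt
  have hinj : Set.InjOn φ (Set.Ici r) := hmono.injective.injOn
  have hptw : ∀ i j, ∀ x, |φ' x| • (g (φ x) i j) = FDE A x i j := by
    intro i j x
    rw [hFDE x, abs_of_pos (hderivpos x), Matrix.smul_apply, smul_eq_mul]
  constructor
  · intro i j
    have h1 : IntegrableOn (fun t => g t i j) (φ '' Set.Ici r) := himg ▸ hgint i j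
    have h2 := (integrableOn_image_iff_integrableOn_abs_deriv_smul measurableSet_Ici hdW hinj
      (fun t => g t i j)).mp h1
    exact h2.congr_fun (fun x _ => hptw i j x) measurableSet_Ici
  · ext i j
    have h3 : ∫ t in φ '' Set.Ici r, g t i j
        = ∫ x in Set.Ici r, |φ' x| • (g (φ x) i j) :=
      integral_image_eq_integral_abs_deriv_smul measurableSet_Ici hdW hinj (fun t => g t i j)
    have h4 : ∫ x in Set.Ici r, FDE A x i j = ∫ t in Set.Ico b 1, g t i j := by
      rw [← himg, h3]
      exact setIntegral_congr_fun measurableSet_Ici (fun x _ => (hptw i j x).symm)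
    simp only [Matrix.of_apply, entryIntegral]
    rw [h4, intervalIntegral.integral_of_le hble,
      MeasureTheory.integral_Ico_eq_integral_Ioo, MeasureTheory.integral_Ioc_eq_integral_Ioo]
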